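/- Let |~ be a nonmonotonic consequence relation (satisfying Supraclassicality, Left Logical Equivalence, Right Weakening, and And). Define α ⪯ β iff ¬β |~ ¬α. Then ⪯ is a disjunctive entrenchment relation: it satisfies Reflexivity, Left Monotonicity, Logical Equivalence, and Left Disjunction. Moreover, if |~ satisfies Or, then ⪯ satisfies Right Conjunction (γ ⪯ α and γ ⪯ β imply γ ⪯ α∧β). -/
import Mathlib


/-- A propositional language: a type of sentences with boolean connectives. -/
structure Lang (L : Type) where
  or : L → L → L
  and : L → L → L
  not : L → L
  imp : L → L → L
  bot : L
  top : L

/-- A classical valuation of the language: respects all connectives. -/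
def Lang.Val {L : Type} (S : Lang L) (v : L → Prop) : Prop :=
  (∀ a b, v (S.or a b) ↔ v a ∨ v b) ∧
  (∀ a b, v (S.and a b) ↔ v a ∧ v b) ∧
  (∀ a, v (S.not a) ↔ ¬ v a) ∧
  (∀ a b, v (S.imp a b) ↔ (v a → v b)) ∧
  ¬ v S.bot ∧ v S.top

/-- Classical consequence from a set of premises. -/
def Lang.SEnt {L : Type} (S : Lang L) (X : Set L) (b : L) : Prop :=
  ∀ v, S.Val v → (∀ a ∈ X, v a) → v b

/-- Classical consequence between single sentences: α ⊢ β. -/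
def Lang.ent {L : Type} (S : Lang L) (a b : L) : Prop := S.SEnt {a} b

/-- Deductive closure. -/
def Lang.Cn {L : Type} (S : Lang L) (X : Set L) : Set L := {b | S.SEnt X b}

/-- Coh(α) = {β | ¬ (β ⪯ ¬α)}. -/
def Coh {L : Type} (S : Lang L) (pr : L → L → Prop) (a : L) : Set L :=
  {b | ¬ pr b (S.not a)}

/-- The base of α: deductively closed subsets of Coh(α). -/
def Base {L : Type} (S : Lang L) (pr : L → L → Prop) (a : L) : Set (Set L) :=
  {U | U = S.Cn U ∧ U ⊆ Coh S pr a}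

/-- The maximal base of α. -/
def MaxBase {L : Type} (S : Lang L) (pr : L → L → Prop) (a : L) : Set (Set L) :=
  {U | U ∈ Base S pr a ∧ ∀ U', U' = S.Cn U' → U ⊂ U' → U' ∉ Base S pr a}

/-- Maxiconsistent inference: α |~⪯ β. -/
def MInf {L : Type} (S : Lang L) (pr : L → L → Prop) (a b : L) : Prop :=
  ∀ U ∈ MaxBase S pr a, b ∈ S.Cn (U ∪ {a})

/-- From a nonmonotonic consequence relation |~, the relation α ⪯ β iff ¬β |~ ¬α is a
disjunctive entrenchment relation; if |~ satisfies Or then ⪯ satisfies Right Conjunction. -/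
theorem stmt18 {L : Type} (S : Lang L) (nm : L → L → Prop)
    (hsupra : ∀ a b, S.ent a b → nm a b)
    (hlle : ∀ a b c, S.ent a b → S.ent b a → nm a c → nm b c)
    (hrw : ∀ a b c, nm a b → S.ent b c → nm a c)
    (hand : ∀ a b c, nm a b → nm a c → nm a (S.and b c))
    (pr : L → L → Prop)
    (hpr : ∀ a b, pr a b ↔ nm (S.not b) (S.not a)) :
    (∀ a, pr a a) ∧
    (∀ a b c, S.ent a b → pr b c → pr a c) ∧
    (∀ a b c, S.ent a b → S.ent b a → (pr c a ↔ pr c b)) ∧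
    (∀ a b c, pr b a → pr c a → pr (S.or b c) a) ∧
    ((∀ a b c, nm a c → nm b c → nm (S.or a b) c) →
      ∀ a b c, pr c a → pr c b → pr c (S.and a b)) := by
  -- helper: ent refl
  have hrefl : ∀ a, S.ent a a := by
    intro a v hv hx; exact hx a (Set.mem_singleton a)
  -- contraposition: a ⊢ b → ¬b ⊢ ¬a
  have hcontra : ∀ a b, S.ent a b → S.ent (S.not b) (S.not a) := by
    intro a b h v hv hx
    obtain ⟨ho, ha, hn, _⟩ := hv
    rw [hn]
    intro hva
    have hvb : v b := h v ⟨ho, ha, hn, ‹_›⟩ (by intro x hx'; rw [Set.mem_singleton_iff] at hx'; rwa [hx'])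
    have := hx (S.not b) (Set.mem_singleton _)
    rw [hn] at this; exact this hvb
  refine ⟨?_, ?_, ?_, ?_, ?_⟩
  · intro a
    rw [hpr]
    exact hsupra _ _ (hrefl _)
  · intro a b c hab h
    rw [hpr] at h ⊢
    exact hrw _ _ _ h (hcontra a b hab)
  · intro a b c hab hba
    rw [hpr, hpr]
    constructor
    · exact fun h => hlle _ _ _ (hcontra _ _ hba) (hcontra _ _ hab) h
    · exact fun h => hlle _ _ _ (hcontra _ _ hab) (hcontra _ _ hba) h
  · intro a b c hb hc
    rw [hpr] at hb hc ⊢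
    have h1 := hand _ _ _ hb hc
    refine hrw _ _ _ h1 ?_
    intro v hv hx
    obtain ⟨ho, ha, hn, _⟩ := hv
    have := hx _ (Set.mem_singleton _)
    rw [ha] at this
    rw [hn, ho]
    rintro (h | h)
    · exact (hn b).mp this.1 h
    · exact (hn c).mp this.2 h
  · intro hor a b c h1 h2
    rw [hpr] at h1 h2 ⊢
    have h3 := hor _ _ _ h1 h2
    refine hlle _ _ _ ?_ ?_ h3
    · -- ¬a ∨ ¬b ⊢ ¬(a ∧ b)
      intro v hv hx
      obtain ⟨ho, ha, hn, _⟩ := hv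
      have := hx _ (Set.mem_singleton _)
      rw [ho, hn, hn] at this
      rw [hn, ha]
      rintro ⟨hva, hvb⟩
      rcases this with h | h
      · exact h hva
      · exact h hvb
    · -- ¬(a ∧ b) ⊢ ¬a ∨ ¬b
      intro v hv hx
      obtain ⟨ho, ha, hn, _⟩ := hv
      have := hx _ (Set.mem_singleton _)
      rw [hn, ha] at this
      rw [ho, hn, hn]
      by_cases hva : v a
      · exact Or.inr fun hvb => this ⟨hva, hvb⟩
      · exact Or.inl hva
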